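/- Let p be a prime and suppose there exists k ≥ 3 such that p + k - 3 is k-representable. Let s be the smallest such k. Then 2^s + s + 3 ≤ p, and consequently s < log_2(p), i.e., s ≤ floor(log_2 p). -/

import Mathlib

def IsRepr (k n : ℕ) : Prop :=
  ∃ x : Fin k → ℕ, (∀ i, 1 ≤ x i) ∧ Monotone x ∧ n = (∏ i, x i) + ∑ i, x i

theorem stmt_13 (p s : ℕ) (hp : p.Prime)
    (hs : 3 ≤ s ∧ IsRepr s (p + s - 3))
    (hmin : ∀ k, 3 ≤ k → IsRepr k (p + k - 3) → s ≤ k) :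
    2 ^ s + s + 3 ≤ p ∧ (s : ℝ) < Real.logb 2 p ∧ s ≤ Nat.log 2 p := by
  obtain ⟨hs3, hrep⟩ := hs
  have key : 2 ^ s + s + 3 ≤ p := by
    obtain ⟨m, rfl⟩ : ∃ m, s = m + 3 := ⟨s - 3, by omega⟩
    obtain ⟨x, hx1, hxm, hxe⟩ := hrep
    by_cases hx0 : x 0 = 1
    · exfalso
      cases m with
      | zero =>
        rw [Fin.prod_univ_three, Fin.sum_univ_three] at hxe
        set a := x 1 with ha
        set b := x 2 with hb
        have hab : a ≤ b := hxm (by decide : (1 : Fin 3) ≤ 2)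
        have ha1 : 1 ≤ a := hx1 1
        have hb1 : 1 ≤ b := hx1 2
        rw [hx0] at hxe
        simp only [one_mul] at hxe
        -- hxe : p + 3 - 3 = a * b + (1 + a + b)
        have hpe : p = a * b + 1 + a + b := by omega
        by_cases ha2 : a = 1
        · rw [ha2, one_mul] at hpe
          have h2 : 2 ∣ p := ⟨b + 1, by omega⟩
          rcases (hp.eq_one_or_self_of_dvd 2 h2) with h | h <;> omega
        · have ha' : 2 ≤ a := by omega
          have hd : (a + 1) ∣ p := ⟨b + 1, by ring_nf; omega⟩
          rcases hp.eq_one_or_self_of_dvd (a + 1) hd with h | h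
          · omega
          · -- a + 1 = p, but p = (a+1)*(b+1) ≥ (a+1)*3
            have : p = (a + 1) * (b + 1) := by ring_nf; omega
            nlinarith
      | succ m' =>
        -- drop the leading 1 to get a representation with one fewer part
        have hdrop : IsRepr (m' + 3) (p + (m' + 3) - 3) := by
          refine ⟨fun i => x i.succ, fun i => hx1 _, ?_, ?_⟩
          · exact fun i j hij => hxm (Fin.succ_le_succ_iff.mpr hij)
          · show p + (m' + 3) - 3 = (∏ i : Fin (m' + 3), x i.succ) + ∑ i : Fin (m' + 3), x i.succ
            rw [Fin.prod_univ_succ, Fin.sum_univ_succ, hx0, one_mul] at hxe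
            omega
        have := hmin (m' + 3) (by omega) hdrop
        omega
    · have h02 : 2 ≤ x 0 := by have := hx1 0; omega
      have h2 : ∀ i, 2 ≤ x i := fun i => le_trans h02 (hxm (Fin.zero_le i))
      have hprod : 2 ^ (m + 3) ≤ ∏ i, x i := by
        calc 2 ^ (m + 3) = ∏ _i : Fin (m + 3), 2 := by
              simp [Finset.prod_const]
          _ ≤ ∏ i, x i :=
              Finset.prod_le_prod (fun i _ => by norm_num) (fun i _ => h2 i)
      have hsum : 2 * (m + 3) ≤ ∑ i, x i := by
        calc 2 * (m + 3) = ∑ _i : Fin (m + 3), 2 := by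
              simp [Finset.sum_const, mul_comm]
          _ ≤ ∑ i, x i := Finset.sum_le_sum (fun i _ => h2 i)
      set P := ∏ i, x i with hP
      set S := ∑ i, x i with hS
      set A := 2 ^ (m + 3) with hA
      omega
  refine ⟨key, ?_, ?_⟩
  · have h2p : (2 : ℝ) ^ (s : ℕ) < p := by
      have : 2 ^ s < p := by omega
      exact_mod_cast this
    have h2s : (0 : ℝ) < 2 ^ (s : ℕ) := by positivity
    have := Real.logb_lt_logb (by norm_num : (1:ℝ) < 2) h2s h2p
    rwa [show ((2:ℝ) ^ (s:ℕ)) = (2:ℝ) ^ (s:ℝ) from (Real.rpow_natCast 2 s).symm,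
      Real.logb_rpow (by norm_num) (by norm_num)] at this
  · have h2p : 2 ^ s ≤ p := by linarith
    exact (Nat.le_log_iff_pow_le (by norm_num) hp.pos.ne').mpr h2p
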